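/- For a satisfiable CI-net N on a finite set O and S_a, S_b ⊆ O: S_a >_N S_b if and only if there exists a sequence of worsening flips with respect to N from S_a to S_b. -/
import Mathlib


variable {O : Type*} [Fintype O] [DecidableEq O]

/-- A strict partial order: irreflexive, asymmetric, transitive. -/
def IsPrefRel {α : Type*} (r : α → α → Prop) : Prop :=
  (∀ a, ¬ r a a) ∧ (∀ a b, r a b → ¬ r b a) ∧ (∀ a b c, r a b → r b c → r a c)

/-- Monotonicity on subsets of `O`: a strict superset is strictly preferred. -/
def Monotonic (r : Finset O → Finset O → Prop) : Prop :=
  ∀ a b : Finset O, b ⊂ a → r a b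

/-- A CI-statement `S⁺, S⁻ : S₁ ▷ S₂` on `O`. -/
structure CIStmt (O : Type*) [DecidableEq O] where
  sp : Finset O
  sm : Finset O
  s1 : Finset O
  s2 : Finset O
  h1 : s1.Nonempty
  h2 : s2.Nonempty
  dpm : Disjoint sp sm
  dp1 : Disjoint sp s1
  dp2 : Disjoint sp s2
  dm1 : Disjoint sm s1
  dm2 : Disjoint sm s2
  d12 : Disjoint s1 s2

/-- `r` satisfies a CI-statement. -/
def SatStmt (r : Finset O → Finset O → Prop) (c : CIStmt O) : Prop :=
  ∀ S' : Finset O, S' ⊆ Finset.univ \ (c.sp ∪ c.sm ∪ c.s1 ∪ c.s2) →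
    r (S' ∪ c.sp ∪ c.s1) (S' ∪ c.sp ∪ c.s2)

/-- `r` satisfies a CI-net: monotone and satisfies each statement. -/
def SatNet (r : Finset O → Finset O → Prop) (N : Set (CIStmt O)) : Prop :=
  Monotonic r ∧ ∀ c ∈ N, SatStmt r c

/-- A CI-net is satisfiable. -/
def CISatisfiable (N : Set (CIStmt O)) : Prop :=
  ∃ r : Finset O → Finset O → Prop, IsPrefRel r ∧ SatNet r N

/-- CI-flip with respect to `N`. -/
def CIFlip (N : Set (CIStmt O)) (a b : Finset O) : Prop :=
  ∃ c ∈ N, ∃ S' ⊆ Finset.univ \ (c.sp ∪ c.sm ∪ c.s1 ∪ c.s2),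
    a = S' ∪ c.sp ∪ c.s1 ∧ b = S' ∪ c.sp ∪ c.s2

/-- Worsening flip: a `⊃`-flip or a CI-flip. -/
def WFlip (N : Set (CIStmt O)) (a b : Finset O) : Prop :=
  b ⊂ a ∨ CIFlip N a b

/-- The intersection of all preference relations satisfying `N`. -/
def Induced (N : Set (CIStmt O)) (a b : Finset O) : Prop :=
  ∀ r : Finset O → Finset O → Prop, IsPrefRel r ∧ SatNet r N → r a b

/-- for a satisfiable CI-net, the induced relation coincides with
reachability by (nonempty) sequences of worsening flips. -/
theorem stmt_3 (N : Set (CIStmt O)) (h : CISatisfiable N) (Sa Sb : Finset O) :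
    Induced N Sa Sb ↔ Relation.TransGen (WFlip N) Sa Sb := by
  -- any satisfying relation contains every worsening flip
  have hflip : ∀ (r : Finset O → Finset O → Prop), IsPrefRel r ∧ SatNet r N →
      ∀ a b, WFlip N a b → r a b := by
    rintro r ⟨_, hmono, hsat⟩ a b (hsub | ⟨c, hc, S', hS', rfl, rfl⟩)
    · exact hmono a b hsub
    · exact hsat c hc S' hS'
  have htg : ∀ (r : Finset O → Finset O → Prop), IsPrefRel r ∧ SatNet r N →
      ∀ a b, Relation.TransGen (WFlip N) a b → r a b := by
    intro r hr a b htr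
    induction htr with
    | single h' => exact hflip r hr _ _ h'
    | tail _ h' ih => exact hr.1.2.2 _ _ _ ih (hflip r hr _ _ h')
  constructor
  · intro hind
    obtain ⟨r, hr⟩ := h
    apply hind
    refine ⟨⟨?_, ?_, fun a b c => Relation.TransGen.trans⟩, ?_, ?_⟩
    · intro a ha
      exact hr.1.1 a (htg r hr _ _ ha)
    · intro a b hab hba
      exact hr.1.2.1 a b (htg r hr _ _ hab) (htg r hr _ _ hba)
    · intro a b hsub
      exact Relation.TransGen.single (Or.inl hsub)
    · intro c hc S' hS'
      exact Relation.TransGen.single (Or.inr ⟨c, hc, S', hS', rfl, rfl⟩)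
  · intro htr r hr
    exact htg r hr _ _ htr
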